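/- Feasibility of integer solutions of the compact formulation (Proposition 2): Let p be an incentive assignment with p_i ∈ P_i for every i ∈ V. Suppose that for every set X ⊆ V with |X| ≥ ⌊(1 − α)·n⌋ + 1 there exists a node i ∈ X with p_i ≥ p̃_i(X). Then the propagation closure satisfies |A(p)| ≥ ⌈α·n⌉. -/

import Mathlib

open scoped Classical
open Finset

noncomputable section

/-- In-neighbors of `i` in the arc set `E`. -/
def Nbr {V : Type*} [Fintype V] (E : Finset (V × V)) (i : V) : Finset V :=
  Finset.univ.filter (fun j => (j, i) ∈ E)

/-- Propagation iterates of the linear (Γ = 1) GLCIP: `A_0 = ∅` and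
`A_{t+1} = {i : p i + Σ_{j ∈ A_t, (j,i) ∈ E} d j i ≥ h i}`. -/
def propIter {V : Type*} [Fintype V] (E : Finset (V × V)) (d : V → V → ℝ)
    (h : V → ℝ) (p : V → ℝ) : ℕ → Finset V
  | 0 => ∅
  | t + 1 => Finset.univ.filter
      (fun i => h i ≤ p i + ∑ j ∈ (propIter E d h p t).filter (fun j => (j, i) ∈ E), d j i)

/-- Propagation closure `A(p) = A_n` with `n = |V|`. -/
def propClosure {V : Type*} [Fintype V] (E : Finset (V × V)) (d : V → V → ℝ)
    (h : V → ℝ) (p : V → ℝ) : Finset V :=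
  propIter E d h p (Fintype.card V)

lemma propIter_mono {V : Type*} [Fintype V] (E : Finset (V × V)) (d : V → V → ℝ)
    (h : V → ℝ) (p : V → ℝ) (hd : ∀ a ∈ E, 0 < d a.1 a.2) :
    ∀ t, propIter E d h p t ⊆ propIter E d h p (t + 1) := by
  intro t
  induction t with
  | zero => simp [propIter]
  | succ t ih =>
    intro i hi
    simp only [propIter, mem_filter, mem_univ, true_and] at hi ⊢
    refine Finset.mem_filter.mpr ⟨Finset.mem_univ _, hi.trans (add_le_add_right ?_ _)⟩
    refine Finset.sum_le_sum_of_subset_of_nonneg ?_ ?_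
    · exact Finset.filter_subset_filter _ ih
    · intro j hj _
      exact le_of_lt (hd (j, i) (Finset.mem_filter.mp hj).2)

lemma propIter_stab {V : Type*} [Fintype V] (E : Finset (V × V)) (d : V → V → ℝ)
    (h : V → ℝ) (p : V → ℝ) {t : ℕ}
    (heq : propIter E d h p t = propIter E d h p (t + 1)) :
    ∀ k, propIter E d h p (t + k) = propIter E d h p t := by
  intro k
  induction k with
  | zero => rfl
  | succ k ih =>
    have : propIter E d h p (t + k + 1) = propIter E d h p (t + 1) := by
      simp only [propIter, ih]
    simpa [← heq, Nat.add_assoc] using this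

lemma propClosure_fixed {V : Type*} [Fintype V] (E : Finset (V × V)) (d : V → V → ℝ)
    (h : V → ℝ) (p : V → ℝ) (hd : ∀ a ∈ E, 0 < d a.1 a.2) :
    propIter E d h p (Fintype.card V + 1) = propClosure E d h p := by
  have key : ∀ t, propIter E d h p t = propIter E d h p (t + 1) ∨
      t ≤ (propIter E d h p t).card := by
    intro t
    induction t with
    | zero => exact Or.inr (Nat.zero_le _)
    | succ t ih =>
      rcases ih with heq | hcard
      · left
        have := propIter_stab E d h p heq 2
        have h1 := propIter_stab E d h p heq 1
        simp only [show t + 2 = t + 1 + 1 from rfl] at this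
        rw [this, h1]
      · by_cases heq : propIter E d h p t = propIter E d h p (t + 1)
        · left
          have := propIter_stab E d h p heq 2
          have h1 := propIter_stab E d h p heq 1
          rw [show t + 2 = t + 1 + 1 from rfl] at this
          rw [this, h1]
        · right
          have hsub := propIter_mono E d h p hd t
          have : (propIter E d h p t).card < (propIter E d h p (t + 1)).card :=
            Finset.card_lt_card (lt_of_le_of_ne hsub heq)
          omega
  rcases key (Fintype.card V) with heq | hcard
  · exact heq.symm
  · have huniv : propIter E d h p (Fintype.card V) = Finset.univ := by
      apply Finset.eq_univ_of_card
      exact le_antisymm (Finset.card_le_univ _) (by simpa [Finset.card_univ] using hcard)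
    have huniv' : propIter E d h p (Fintype.card V + 1) = Finset.univ :=
      Finset.eq_univ_of_forall fun i => propIter_mono E d h p hd _ (huniv ▸ Finset.mem_univ i)
    rw [huniv', propClosure, huniv]

theorem cf_integer_solution_feasible {V : Type*} [Fintype V]
    (E : Finset (V × V)) (d : V → V → ℝ) (h : V → ℝ) (P : V → Finset ℝ) (α : ℝ)
    (hE : ∀ a ∈ E, a.1 ≠ a.2)
    (hd : ∀ a ∈ E, 0 < d a.1 a.2)
    (hh : ∀ i, 0 < h i)
    (hP0 : ∀ i, (0 : ℝ) ∈ P i)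
    (hPnn : ∀ i, ∀ q ∈ P i, 0 ≤ q)
    (hα0 : 0 ≤ α) (hα1 : α ≤ 1)
    (hact : ∀ i, ∃ q ∈ P i, h i ≤ q)
    (pt : Finset V → V → ℝ)
    (hpt : ∀ (X : Finset V), ∀ i ∈ X,
      IsLeast {q : ℝ | q ∈ P i ∧ h i ≤ q + ∑ j ∈ Nbr E i \ X, d j i} (pt X i))
    (p : V → ℝ) (hp : ∀ i, p i ∈ P i)
    (hcons : ∀ X : Finset V,
      (X.card : ℤ) ≥ ⌊(1 - α) * (Fintype.card V : ℝ)⌋ + 1 →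
      ∃ i ∈ X, pt X i ≤ p i) :
    ((propClosure E d h p).card : ℤ) ≥ ⌈α * (Fintype.card V : ℝ)⌉ := by
  by_contra hcon
  push_neg at hcon
  set n := Fintype.card V with hn
  set A := propClosure E d h p with hA
  set X := Aᶜ with hX
  have hfloor : ⌊(1 - α) * (n : ℝ)⌋ = (n : ℤ) - ⌈α * (n : ℝ)⌉ := by
    have e : (1 - α) * (n : ℝ) = -(α * (n : ℝ)) + ((n : ℤ) : ℝ) := by push_cast; ring
    rw [e, Int.floor_add_intCast, Int.floor_neg]; ring
  have hcardX : (X.card : ℤ) = (n : ℤ) - A.card := by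
    have h1 : A.card ≤ n := Finset.card_le_univ A
    rw [hX, Finset.card_compl]
    push_cast [Nat.cast_sub (show A.card ≤ Fintype.card V from h1)]
    ring
  have hXbig : (X.card : ℤ) ≥ ⌊(1 - α) * (n : ℝ)⌋ + 1 := by
    rw [hcardX, hfloor]; omega
  obtain ⟨i, hiX, hile⟩ := hcons X hXbig
  obtain ⟨⟨hmem, hge⟩, -⟩ := hpt X i hiX
  have hsetEq : Nbr E i \ X = A.filter (fun j => (j, i) ∈ E) := by
    ext j
    simp [Nbr, hX, Finset.mem_sdiff, Finset.mem_filter, Finset.mem_compl]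
    tauto
  have hkey : h i ≤ p i + ∑ j ∈ A.filter (fun j => (j, i) ∈ E), d j i := by
    rw [← hsetEq]
    calc h i ≤ pt X i + ∑ j ∈ Nbr E i \ X, d j i := hge
      _ ≤ p i + ∑ j ∈ Nbr E i \ X, d j i := by linarith
  have hiA : i ∈ propIter E d h p (n + 1) := by
    simp only [propIter, Finset.mem_filter, Finset.mem_univ, true_and]
    exact hkey
  rw [propClosure_fixed E d h p hd] at hiA
  exact (Finset.mem_compl.mp hiX) hiA
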